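/- With Z, W, μ_Z, τ_W as above, let τ_W^{(k)} denote the time of the k-th return to W. For each i ≥ 1 and each integer ω ≥ 1, using independence of the successive W-return block lengths, μ_Z({x ∈ Z : τ_W^{(i+j−1)}(x) − τ_W^{(i+j−2)}(x) < N^{j+1} for all 1 ≤ j ≤ ω}) ≤ Π_{j=1}^ω N^{j+1} μ(W) ≤ N^{(ω+1)(ω+2)/2} μ(W)^ω. -/

import Mathlib

open scoped Matrix.Norms.L2Operator ENNReal
open MeasureTheory Filter Topology

instance : MeasurableSpace (Matrix (Fin 2) (Fin 2) ℝ) :=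
  (inferInstance : MeasurableSpace (Fin 2 → Fin 2 → ℝ))

/-- The sequence space `Σ = {0,1}^ℤ`. -/
abbrev Sig : Type := ℤ → Bool

/-- The left shift map. -/
def shift (x : Sig) : Sig := fun n => x (n + 1)

/-- The cocycle product `A^n(x) = A(T^{n-1}x) ⋯ A(x)` over a map `T`. -/
noncomputable def cocycleOver {X : Type*} (T : X → X)
    (A : X → Matrix (Fin 2) (Fin 2) ℝ) : ℕ → X → Matrix (Fin 2) (Fin 2) ℝ
  | 0, _ => 1
  | n + 1, x => cocycleOver T A n (T x) * A x

/-- The cocycle product over the left shift. -/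
noncomputable abbrev cocycle : (Sig → Matrix (Fin 2) (Fin 2) ℝ) → ℕ → Sig → Matrix (Fin 2) (Fin 2) ℝ :=
  cocycleOver shift

/-- The diagonal cocycle `A_σ`. -/
noncomputable def Asig (σ : ℝ) (x : Sig) : Matrix (Fin 2) (Fin 2) ℝ :=
  if x 0 then Matrix.diagonal ![σ, σ⁻¹] else Matrix.diagonal ![σ⁻¹, σ]

/-- `μ` is the Bernoulli product measure with parameter `p` on `{0,1}^ℤ`. -/
def IsBernoulli (p : ℝ) (μ : Measure Sig) : Prop :=
  IsProbabilityMeasure μ ∧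
    ∀ (s : Finset ℤ) (b : ℤ → Bool),
      μ {x | ∀ i ∈ s, x i = b i} = ∏ i ∈ s, ENNReal.ofReal (if b i then p else 1 - p)

/-- The upper Lyapunov exponent `λ₊(A,μ) = inf_{n ≥ 1} (1/n) ∫ log ‖A^n‖ dμ`. -/
noncomputable def lyap {X : Type*} [MeasurableSpace X] (T : X → X) (A : X → Matrix (Fin 2) (Fin 2) ℝ)
    (μ : Measure X) : ℝ :=
  ⨅ n : ℕ, ((n : ℝ) + 1)⁻¹ * ∫ x, Real.log ‖cocycleOver T A (n + 1) x‖ ∂μ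

/-- The first return time to a set `Z` under the shift. -/
noncomputable def retTime (Z : Set Sig) (x : Sig) : ℕ :=
  sInf {n : ℕ | 1 ≤ n ∧ shift^[n] x ∈ Z}

/-- The `k`-th return time to `W` under the shift. -/
noncomputable def retTimeK (W : Set Sig) : ℕ → Sig → ℕ
  | 0, _ => 0
  | k + 1, x => retTimeK W k x + retTime W (shift^[retTimeK W k x] x)

/-- The distance `d(x,y) = 2^{-N(x,y)}` on `Σ`. -/
noncomputable def NSig (x y : Sig) : ℕ :=
  sSup {N : ℕ | ∀ n : ℤ, |n| < (N : ℤ) → x n = y n}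

open Classical in
noncomputable def dSig (x y : Sig) : ℝ :=
  if x = y then 0 else (2 : ℝ) ^ (-(NSig x y : ℤ))

/-- The `α`-Hölder norm of a matrix-valued function on `Σ`. -/
noncomputable def holderNorm (α : ℝ) (A : Sig → Matrix (Fin 2) (Fin 2) ℝ) : ℝ :=
  (⨆ x : Sig, ‖A x‖) +
    ⨆ q : {q : Sig × Sig // q.1 ≠ q.2}, ‖A q.1.1 - A q.1.2‖ / (dSig q.1.1 q.1.2) ^ α

/-- A locally constant function on `Σ`: constant on cylinders of some finite length. -/
def IsLocConst (A : Sig → Matrix (Fin 2) (Fin 2) ℝ) : Prop :=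
  ∃ k : ℕ, ∀ x y : Sig, (∀ n : ℤ, |n| ≤ (k : ℤ) → x n = y n) → A x = A y

/-- The cocycle takes values in `SL(2,ℝ)`. -/
def IsSL2 (A : Sig → Matrix (Fin 2) (Fin 2) ℝ) : Prop := ∀ x, (A x).det = 1

/-- The sum `S_n(x)` of the first `n` symbols of `x`. -/
def Ssum (n : ℕ) (x : Sig) : ℕ := ∑ i ∈ Finset.range n, (if x (i : ℤ) then 1 else 0)

noncomputable def wgt (p : ℝ) (b : Bool) : ENNReal := ENNReal.ofReal (if b then p else 1 - p)

def cylSet (u : Finset ℤ) (f : ℤ → Bool) : Set Sig := {x | ∀ i ∈ u, x i = f i}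

lemma cylSet_meas (u : Finset ℤ) (f : ℤ → Bool) : MeasurableSet (cylSet u f) := by
  have : cylSet u f = ⋂ i ∈ u, {x : Sig | x i = f i} := by
    ext x; simp [cylSet]
  rw [this]
  refine MeasurableSet.biInter u.countable_toSet fun i _ => ?_
  have : {x : Sig | x i = f i} = (fun x : Sig => x i) ⁻¹' {f i} := rfl
  rw [this]
  exact (measurable_pi_apply i) (measurableSet_singleton (f i))

lemma mu_cylSet {p : ℝ} {μ : Measure Sig} (hμ : IsBernoulli p μ) (u : Finset ℤ) (f : ℤ → Bool) :
    μ (cylSet u f) = ∏ i ∈ u, wgt p (f i) := hμ.2 u f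

/-- A set determined by coordinates in `u`. -/
def DetOn (u : Finset ℤ) (A : Set Sig) : Prop :=
  ∀ x y : Sig, (∀ i ∈ u, x i = y i) → x ∈ A → y ∈ A

lemma DetOn.mono {u v : Finset ℤ} {A : Set Sig} (h : DetOn u A) (huv : u ⊆ v) : DetOn v A :=
  fun x y hxy => h x y fun i hi => hxy i (huv hi)

lemma DetOn.inter {u : Finset ℤ} {A B : Set Sig} (hA : DetOn u A) (hB : DetOn u B) :
    DetOn u (A ∩ B) := fun x y hxy hx => ⟨hA x y hxy hx.1, hB x y hxy hx.2⟩

lemma DetOn.compl {u : Finset ℤ} {A : Set Sig} (hA : DetOn u A) : DetOn u Aᶜ :=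
  fun x y hxy hx hy => hx (hA y x (fun i hi => (hxy i hi).symm) hy)

lemma detOn_cylSet (u : Finset ℤ) (f : ℤ → Bool) : DetOn u (cylSet u f) :=
  fun x y hxy hx i hi => (hxy i hi).symm.trans (hx i hi)

open Classical in
/-- Decomposition of a coordinate-determined set into cylinders. -/
lemma detOn_decomp {u : Finset ℤ} {A : Set Sig} (hA : DetOn u A) (f : ℤ → Bool) :
    A = ⋃ c ∈ Finset.univ.filter
        (fun c : ↥u → Bool => (fun i => if h : i ∈ u then c ⟨i, h⟩ else f i) ∈ A),
      cylSet u (fun i => if h : i ∈ u then c ⟨i, h⟩ else f i) := by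
  ext x
  constructor
  · intro hx
    refine Set.mem_iUnion₂.2 ⟨fun i => x (i : ℤ), ?_, ?_⟩
    · simp only [Finset.mem_filter, Finset.mem_univ, true_and]
      exact hA x _ (fun i hi => by simp [hi]) hx
    · intro i hi; simp [hi]
  · intro hx
    obtain ⟨c, hc, hxc⟩ := Set.mem_iUnion₂.1 hx
    simp only [Finset.mem_filter, Finset.mem_univ, true_and] at hc
    exact hA _ x (fun i hi => ((hxc i hi).symm)) hc

open Classical in
lemma DetOn.measurableSet {u : Finset ℤ} {A : Set Sig} (hA : DetOn u A) : MeasurableSet A := by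
  rw [detOn_decomp hA (fun _ => false)]
  exact MeasurableSet.biUnion (Finset.countable_toSet _) fun c _ => cylSet_meas _ _

open Classical in
/-- Key independence lemma: a coordinate-determined set and a cylinder on disjoint coordinates. -/
lemma mu_inter_cyl {p : ℝ} {μ : Measure Sig} (hμ : IsBernoulli p μ) {u t : Finset ℤ}
    (hdisj : Disjoint u t) {A : Set Sig} (hA : DetOn u A) (f : ℤ → Bool) :
    μ (A ∩ cylSet t f) = μ A * ∏ i ∈ t, wgt p (f i) := by
  set mrg : (↥u → Bool) → ℤ → Bool := fun c i => if h : i ∈ u then c ⟨i, h⟩ else f i with hmrg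
  set F : Finset (↥u → Bool) := Finset.univ.filter (fun c => mrg c ∈ A) with hF
  have hdec : A = ⋃ c ∈ F, cylSet u (mrg c) := detOn_decomp hA f
  have hpd : Set.PairwiseDisjoint (↑F) (fun c => cylSet u (mrg c)) := by
    intro c _ c' _ hne
    refine Set.disjoint_left.2 fun x hx hx' => hne ?_
    funext i
    have h1 := hx (i : ℤ) i.2
    have h2 := hx' (i : ℤ) i.2
    simp only [hmrg, dif_pos i.2] at h1 h2
    rw [← h1, h2]
  have hmuA : μ A = ∑ c ∈ F, μ (cylSet u (mrg c)) := by
    rw [hdec]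
    exact measure_biUnion_finset hpd fun c _ => cylSet_meas _ _
  -- intersection decomposition
  have hkey : ∀ c : ↥u → Bool, cylSet u (mrg c) ∩ cylSet t f = cylSet (u ∪ t) (mrg c) := by
    intro c
    ext x
    constructor
    · rintro ⟨h1, h2⟩ i hi
      rcases Finset.mem_union.1 hi with h | h
      · exact h1 i h
      · have : i ∉ u := fun hu => (Finset.disjoint_left.1 hdisj) hu h
        rw [hmrg]; simp only [dif_neg this]; exact h2 i h
    · intro hx
      refine ⟨fun i hi => hx i (Finset.mem_union_left _ hi), fun i hi => ?_⟩
      have hiu : i ∉ u := fun hu => (Finset.disjoint_left.1 hdisj) hu hi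
      have := hx i (Finset.mem_union_right _ hi)
      simpa [mrg, hiu] using this
  have hinter : A ∩ cylSet t f = ⋃ c ∈ F, cylSet (u ∪ t) (mrg c) := by
    rw [hdec, Set.iUnion₂_inter]
    exact Set.iUnion₂_congr fun c hc => hkey c
  have hpd2 : Set.PairwiseDisjoint (↑F) (fun c => cylSet (u ∪ t) (mrg c)) := by
    intro c hc c' hc' hne
    refine (hpd hc hc' hne).mono ?_ ?_ <;>
      exact fun x hx i hi => hx i (Finset.mem_union_left _ hi)
  have hmu2 : μ (A ∩ cylSet t f) = ∑ c ∈ F, μ (cylSet (u ∪ t) (mrg c)) := by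
    rw [hinter]
    exact measure_biUnion_finset hpd2 fun c _ => cylSet_meas _ _
  rw [hmu2, hmuA, Finset.sum_mul]
  refine Finset.sum_congr rfl fun c hc => ?_
  rw [mu_cylSet hμ, mu_cylSet hμ, Finset.prod_union hdisj]
  congr 1
  refine Finset.prod_congr rfl fun i hi => ?_
  have hiu : i ∉ u := fun hu => (Finset.disjoint_left.1 hdisj) hu hi
  rw [hmrg]; simp [dif_neg hiu]

lemma shift_iter (n : ℕ) (x : Sig) (k : ℤ) : shift^[n] x k = x (k + n) := by
  induction n generalizing x with
  | zero => simp
  | succ n ih =>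
    rw [Function.iterate_succ_apply, ih (shift x)]
    show x (k + n + 1) = _
    congr 1; push_cast; ring

section W
variable {p : ℝ} {μ : Measure Sig} {g : ℕ} {W : Set Sig}

noncomputable def blockF (g : ℕ) (s : ℕ) : Finset ℤ := Finset.Icc (s : ℤ) ((s : ℤ) + g)

def blockPat (s : ℕ) : ℤ → Bool := fun i => decide (i = (s : ℤ))

def hitSet (W : Set Sig) (s : ℕ) : Set Sig := {x | shift^[s] x ∈ W}

lemma hitSet_eq (hWdef : W = {x : Sig | x 0 = true ∧ ∀ k : ℤ, 1 ≤ k → k ≤ (g : ℤ) → x k = false})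
    (s : ℕ) : hitSet W s = cylSet (blockF g s) (blockPat s) := by
  ext x
  simp only [hitSet, hWdef, Set.mem_setOf_eq, cylSet, blockF, blockPat, Finset.mem_Icc]
  constructor
  · rintro ⟨h0, hk⟩ i ⟨hi1, hi2⟩
    rcases eq_or_lt_of_le hi1 with h | h
    · rw [← h]
      have hb : decide ((s:ℤ) = (s:ℤ)) = true := by simp
      rw [hb]
      simpa [shift_iter] using h0
    · have hxi : x i = false := by
        have := hk (i - s) (by omega) (by omega)
        rw [shift_iter] at this
        simpa [sub_add_cancel] using this
      have hne : i ≠ (s : ℤ) := by omega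
      simp [hxi, blockPat, hne]
  · intro h
    constructor
    · have := h (s : ℤ) ⟨le_refl _, by omega⟩
      simp at this
      simpa [shift_iter] using this
    · intro k hk1 hk2
      have hx := h (k + s) ⟨by omega, by omega⟩
      rw [shift_iter, hx]
      simp only [blockPat, decide_eq_false_iff_not]
      omega

lemma detOn_hitSet (hWdef : W = {x : Sig | x 0 = true ∧ ∀ k : ℤ, 1 ≤ k → k ≤ (g : ℤ) → x k = false})
    (s : ℕ) : DetOn (blockF g s) (hitSet W s) := by
  rw [hitSet_eq hWdef]; exact detOn_cylSet _ _

lemma prod_block (hp : p ∈ Set.Ioo (0:ℝ) 1) (s : ℕ) :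
    ∏ i ∈ blockF g s, wgt p (blockPat s i) = ENNReal.ofReal (p * (1 - p) ^ g) := by
  have hmem : (s : ℤ) ∈ blockF g s := by simp [blockF]
  rw [← Finset.mul_prod_erase _ _ hmem]
  have h1 : wgt p (blockPat s (s : ℤ)) = ENNReal.ofReal p := by simp [wgt, blockPat]
  have h2 : ∀ i ∈ (blockF g s).erase (s : ℤ), wgt p (blockPat s i) = ENNReal.ofReal (1 - p) := by
    intro i hi
    have hne : i ≠ (s : ℤ) := Finset.ne_of_mem_erase hi
    simp [wgt, blockPat, hne]
  rw [Finset.prod_congr rfl h2, Finset.prod_const]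
  have hcard : ((blockF g s).erase (s : ℤ)).card = g := by
    rw [Finset.card_erase_of_mem hmem]
    simp only [blockF, Int.card_Icc]
    omega
  rw [hcard, h1, ← ENNReal.ofReal_pow (by linarith [hp.2]), ← ENNReal.ofReal_mul hp.1.le]

lemma mu_hit (hμ : IsBernoulli p μ)
    (hWdef : W = {x : Sig | x 0 = true ∧ ∀ k : ℤ, 1 ≤ k → k ≤ (g : ℤ) → x k = false})
    (hp : p ∈ Set.Ioo (0:ℝ) 1) (s : ℕ) :
    μ (hitSet W s) = ENNReal.ofReal (p * (1 - p) ^ g) := by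
  rw [hitSet_eq hWdef, mu_cylSet hμ, prod_block hp]

lemma indep_hit (hμ : IsBernoulli p μ)
    (hWdef : W = {x : Sig | x 0 = true ∧ ∀ k : ℤ, 1 ≤ k → k ≤ (g : ℤ) → x k = false})
    (hp : p ∈ Set.Ioo (0:ℝ) 1) {M : ℤ} {A : Set Sig} (hA : DetOn (Finset.Icc 0 M) A)
    {s : ℕ} (hs : M < (s : ℤ)) :
    μ (A ∩ hitSet W s) = μ A * ENNReal.ofReal (p * (1 - p) ^ g) := by
  rw [hitSet_eq hWdef, mu_inter_cyl hμ ?_ hA, prod_block hp]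
  rw [Finset.disjoint_left]
  intro i hi hi'
  simp only [Finset.mem_Icc, blockF] at hi hi'
  omega

lemma qW_le_one (hp : p ∈ Set.Ioo (0:ℝ) 1) : ENNReal.ofReal (p * (1 - p) ^ g) ≤ 1 := by
  rw [ENNReal.ofReal_le_one]
  have h1 : (1 - p) ^ g ≤ 1 := pow_le_one₀ (by linarith [hp.2]) (by linarith [hp.1])
  nlinarith [hp.1, hp.2]

lemma qW_pos (hp : p ∈ Set.Ioo (0:ℝ) 1) : 0 < ENNReal.ofReal (p * (1 - p) ^ g) := by
  rw [ENNReal.ofReal_pos]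
  have h1 : (0:ℝ) < 1 - p := by linarith [hp.2]
  exact mul_pos hp.1 (pow_pos h1 g)

lemma indep_hit_compl (hμ : IsBernoulli p μ)
    (hWdef : W = {x : Sig | x 0 = true ∧ ∀ k : ℤ, 1 ≤ k → k ≤ (g : ℤ) → x k = false})
    (hp : p ∈ Set.Ioo (0:ℝ) 1) {M : ℤ} {A : Set Sig} (hA : DetOn (Finset.Icc 0 M) A)
    {s : ℕ} (hs : M < (s : ℤ)) :
    μ (A ∩ (hitSet W s)ᶜ) ≤ μ A * (1 - ENNReal.ofReal (p * (1 - p) ^ g)) := by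
  set q := ENNReal.ofReal (p * (1 - p) ^ g)
  have hBmeas : MeasurableSet (hitSet W s) := by
    rw [hitSet_eq hWdef]; exact cylSet_meas _ _
  have h1 : μ (A ∩ hitSet W s) + μ (A \ hitSet W s) = μ A :=
    measure_inter_add_diff A hBmeas
  have h2 : μ (A ∩ hitSet W s) = μ A * q := indep_hit hμ hWdef hp hA hs
  have hfin : μ (A ∩ hitSet W s) ≠ ⊤ := by
    haveI := hμ.1
    exact (measure_lt_top μ _).ne
  have h3 : μ (A ∩ (hitSet W s)ᶜ) = μ A - μ A * q := by
    rw [← Set.diff_eq, ← h2]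
    exact ENNReal.eq_sub_of_add_eq hfin (by rw [add_comm]; exact h1)
  rw [h3]
  rw [tsub_le_iff_right, ← mul_add, tsub_add_cancel_of_le (qW_le_one hp), mul_one]

end W

def BadSet (W : Set Sig) : Set Sig := {x | ∃ m : ℕ, ∀ s : ℕ, m < s → shift^[s] x ∉ W}

section RET
open scoped Classical
variable {g N : ℕ} {W Z : Set Sig} {x : Sig}

lemma retTime_spec (hx : x ∉ BadSet W) (a : ℕ) :
    1 ≤ retTime W (shift^[a] x) ∧ shift^[a + retTime W (shift^[a] x)] x ∈ W ∧
      ∀ n, 1 ≤ n → n < retTime W (shift^[a] x) → shift^[a + n] x ∉ W := by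
  have hne : {n : ℕ | 1 ≤ n ∧ shift^[n] (shift^[a] x) ∈ W}.Nonempty := by
    simp only [BadSet, Set.mem_setOf_eq, not_exists] at hx
    have := hx a
    push_neg at this
    obtain ⟨s, hs1, hs2⟩ := this
    refine ⟨s - a, by omega, ?_⟩
    rw [← Function.iterate_add_apply]
    have : s - a + a = s := by omega
    rw [this]
    exact hs2
  have hmem := Nat.sInf_mem hne
  refine ⟨hmem.1, ?_, ?_⟩
  · have := hmem.2
    rwa [← Function.iterate_add_apply, Nat.add_comm] at this
  · intro n hn1 hn2
    intro hcon
    have : n ∈ {n : ℕ | 1 ≤ n ∧ shift^[n] (shift^[a] x) ∈ W} := by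
      refine ⟨hn1, ?_⟩
      rw [← Function.iterate_add_apply, Nat.add_comm]
      exact hcon
    have hle := Nat.sInf_le this
    rw [show retTime W (shift^[a] x) = sInf {n : ℕ | 1 ≤ n ∧ shift^[n] (shift^[a] x) ∈ W} from rfl]
      at hn2
    omega

lemma hit_tk (hW : x ∈ W) (hx : x ∉ BadSet W) (k : ℕ) :
    shift^[retTimeK W k x] x ∈ W := by
  induction k with
  | zero => simpa [retTimeK] using hW
  | succ k ih =>
    show shift^[retTimeK W k x + retTime W (shift^[retTimeK W k x] x)] x ∈ W
    exact (retTime_spec hx (retTimeK W k x)).2.1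

lemma gap_tk (hWdef : W = {x : Sig | x 0 = true ∧ ∀ k : ℤ, 1 ≤ k → k ≤ (g : ℤ) → x k = false})
    (hW : x ∈ W) (hx : x ∉ BadSet W) (k : ℕ) :
    retTimeK W k x + (g + 1) ≤ retTimeK W (k+1) x := by
  have hhit := hit_tk hW hx k
  have hspec := retTime_spec hx (retTimeK W k x)
  set r := retTime W (shift^[retTimeK W k x] x) with hr
  have hrg : g + 1 ≤ r := by
    by_contra hcon
    push_neg at hcon
    have hmemW : ∀ y : Sig, y ∈ W →
        y 0 = true ∧ ∀ k : ℤ, 1 ≤ k → k ≤ (g : ℤ) → y k = false := fun y hy => by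
      rw [hWdef] at hy; exact hy
    have h1 : shift^[retTimeK W k x + r] x 0 = true := (hmemW _ hspec.2.1).1
    have h2 : shift^[retTimeK W k x] x (r : ℤ) = false :=
      (hmemW _ hhit).2 r (by exact_mod_cast hspec.1) (by exact_mod_cast (by omega : r ≤ g))
    rw [shift_iter] at h1 h2
    simp only [zero_add] at h1
    rw [(by push_cast; ring : ((r:ℤ) + (retTimeK W k x : ℕ)) = ((retTimeK W k x + r : ℕ) : ℤ))]
      at h2
    rw [h1] at h2
    simp at h2
  show retTimeK W k x + (g + 1) ≤ retTimeK W k x + r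
  omega

lemma mono_tk (hWdef : W = {x : Sig | x 0 = true ∧ ∀ k : ℤ, 1 ≤ k → k ≤ (g : ℤ) → x k = false})
    (hW : x ∈ W) (hx : x ∉ BadSet W) {k l : ℕ} (hkl : k < l) :
    retTimeK W k x + (g + 1) ≤ retTimeK W l x := by
  induction l with
  | zero => omega
  | succ l ih =>
    rcases Nat.lt_succ_iff_lt_or_eq.1 hkl with h | h
    · have h2 := gap_tk hWdef hW hx l
      have := ih h
      omega
    · subst h
      exact gap_tk hWdef hW hx k

lemma count_tk (hWdef : W = {x : Sig | x 0 = true ∧ ∀ k : ℤ, 1 ≤ k → k ≤ (g : ℤ) → x k = false})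
    (hW : x ∈ W) (hx : x ∉ BadSet W) (k : ℕ) :
    ((Finset.Icc 1 (retTimeK W k x)).filter (fun s => shift^[s] x ∈ W)).card = k := by
  induction k with
  | zero => simp [retTimeK]
  | succ k ih =>
    have hmono := gap_tk hWdef hW hx k
    have hsplit : (Finset.Icc 1 (retTimeK W (k+1) x)).filter (fun s => shift^[s] x ∈ W) =
        insert (retTimeK W (k+1) x)
          ((Finset.Icc 1 (retTimeK W k x)).filter (fun s => shift^[s] x ∈ W)) := by
      ext s
      simp only [Finset.mem_filter, Finset.mem_insert, Finset.mem_Icc]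
      constructor
      · rintro ⟨⟨hs1, hs2⟩, hs3⟩
        rcases Nat.lt_or_ge (retTimeK W k x) s with h | h
        · rcases Nat.lt_or_ge s (retTimeK W (k+1) x) with h2 | h2
          · exfalso
            have hmin := (retTime_spec hx (retTimeK W k x)).2.2 (s - retTimeK W k x)
              (by omega)
              (by
                show s - retTimeK W k x < retTime W (shift^[retTimeK W k x] x)
                have : retTimeK W (k+1) x =
                  retTimeK W k x + retTime W (shift^[retTimeK W k x] x) := rfl
                omega)
            rw [(by omega : retTimeK W k x + (s - retTimeK W k x) = s)] at hmin
            exact hmin hs3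
          · left; omega
        · right; exact ⟨⟨hs1, h⟩, hs3⟩
      · rintro (h | ⟨⟨hs1, hs2⟩, hs3⟩)
        · subst h
          exact ⟨⟨by omega, le_rfl⟩, hit_tk hW hx (k+1)⟩
        · exact ⟨⟨hs1, by omega⟩, hs3⟩
    rw [hsplit, Finset.card_insert_of_notMem, ih]
    simp only [Finset.mem_filter, Finset.mem_Icc]
    rintro ⟨⟨h1, h2⟩, h3⟩
    omega

lemma retTime_Z_gt (hZdef : Z = {x : Sig | x 0 = true ∧ ∀ k : ℤ, 1 ≤ k → k ≤ (N : ℤ) → x k = false})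
    (hZ : x ∈ Z) (hx : x ∉ BadSet W)
    (hWdef : W = {x : Sig | x 0 = true ∧ ∀ k : ℤ, 1 ≤ k → k ≤ (g : ℤ) → x k = false}) :
    N < retTimeK W 1 x := by
  have hspec := retTime_spec hx 0
  simp only [Function.iterate_zero_apply, Nat.zero_add] at hspec
  set r := retTime W x with hr
  have h1 : retTimeK W 1 x = r := by
    show retTimeK W 0 x + retTime W (shift^[retTimeK W 0 x] x) = r
    simp [retTimeK, hr]
  rw [h1]
  by_contra hcon
  push_neg at hcon
  have hmem1 := hspec.2.1
  rw [hWdef] at hmem1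
  have hrt : shift^[r] x 0 = true := hmem1.1
  rw [shift_iter, zero_add] at hrt
  rw [hZdef] at hZ
  have hrf : x (r : ℤ) = false :=
    hZ.2 r (by exact_mod_cast hspec.1) (by exact_mod_cast hcon)
  rw [hrt] at hrf
  simp at hrf

end RET

section C3
open MeasureTheory
variable {p : ℝ} {μ : Measure Sig} {g N ωn : ℕ} {W : Set Sig}

def posSeq (g m l : ℕ) : ℕ := m + 1 + l * (g + 1)

lemma tail_bound (hμ : IsBernoulli p μ)
    (hWdef : W = {x : Sig | x 0 = true ∧ ∀ k : ℤ, 1 ≤ k → k ≤ (g : ℤ) → x k = false})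
    (hp : p ∈ Set.Ioo (0:ℝ) 1) (m : ℕ) : ∀ n : ℕ,
    DetOn (Finset.Icc 0 ((m + n * (g + 1) : ℕ) : ℤ))
        (⋂ l ∈ Finset.range n, (hitSet W (posSeq g m l))ᶜ) ∧
      μ (⋂ l ∈ Finset.range n, (hitSet W (posSeq g m l))ᶜ) ≤
        (1 - ENNReal.ofReal (p * (1 - p) ^ g)) ^ n := by
  haveI := hμ.1
  intro n
  induction n with
  | zero =>
    simp only [Finset.range_zero, Finset.notMem_empty, Set.iInter_of_empty, Set.iInter_univ,
      pow_zero]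
    exact ⟨fun x y _ h => h, by simp⟩
  | succ n ih =>
    have hsplit : (⋂ l ∈ Finset.range (n+1), (hitSet W (posSeq g m l))ᶜ) =
        (⋂ l ∈ Finset.range n, (hitSet W (posSeq g m l))ᶜ) ∩ (hitSet W (posSeq g m n))ᶜ := by
      rw [Finset.range_add_one]
      rw [Finset.set_biInter_insert]
      exact Set.inter_comm _ _
    have hnat : m + 1 + n * (g + 1) + g = m + (n+1) * (g+1) := by ring
    have hsub : blockF g (posSeq g m n) ⊆ Finset.Icc 0 ((m + (n+1) * (g + 1) : ℕ) : ℤ) := by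
      intro i hi
      simp only [blockF, Finset.mem_Icc, posSeq] at hi ⊢
      omega
    have hsub2 : Finset.Icc (0:ℤ) ((m + n * (g + 1) : ℕ) : ℤ) ⊆
        Finset.Icc 0 ((m + (n+1) * (g + 1) : ℕ) : ℤ) := by
      apply Finset.Icc_subset_Icc le_rfl
      have h2 : m + n * (g+1) ≤ m + (n+1) * (g+1) :=
        Nat.add_le_add_left (Nat.mul_le_mul_right _ (Nat.le_succ n)) m
      exact_mod_cast h2
    refine ⟨?_, ?_⟩
    · rw [hsplit]
      exact (ih.1.mono hsub2).inter (((detOn_hitSet hWdef _).compl).mono hsub)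
    · rw [hsplit, pow_succ]
      calc μ _ ≤ (μ (⋂ l ∈ Finset.range n, (hitSet W (posSeq g m l))ᶜ)) *
            (1 - ENNReal.ofReal (p * (1 - p) ^ g)) := by
            refine indep_hit_compl hμ hWdef hp ih.1 ?_
            simp only [posSeq]
            exact_mod_cast (by omega : m + n * (g+1) < m + 1 + n * (g+1))
        _ ≤ _ := mul_le_mul_left ih.2 _


lemma mu_bad (hμ : IsBernoulli p μ)
    (hWdef : W = {x : Sig | x 0 = true ∧ ∀ k : ℤ, 1 ≤ k → k ≤ (g : ℤ) → x k = false})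
    (hp : p ∈ Set.Ioo (0:ℝ) 1) : μ (BadSet W) = 0 := by
  have hrw : BadSet W = ⋃ m : ℕ, {x : Sig | ∀ s : ℕ, m < s → shift^[s] x ∉ W} := by
    ext x; simp [BadSet]
  rw [hrw]
  refine measure_iUnion_null fun m => ?_
  have hsub : ∀ n : ℕ, {x : Sig | ∀ s : ℕ, m < s → shift^[s] x ∉ W} ⊆
      ⋂ l ∈ Finset.range n, (hitSet W (posSeq g m l))ᶜ := by
    intro n x hx
    refine Set.mem_biInter fun l _ => ?_
    exact hx (posSeq g m l) (by simp [posSeq]; omega)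
  have hb : ∀ n : ℕ, μ {x : Sig | ∀ s : ℕ, m < s → shift^[s] x ∉ W} ≤
      (1 - ENNReal.ofReal (p * (1 - p) ^ g)) ^ n :=
    fun n => le_trans (measure_mono (hsub n)) (tail_bound hμ hWdef hp m n).2
  have hlt : (1 - ENNReal.ofReal (p * (1 - p) ^ g)) < 1 :=
    ENNReal.sub_lt_self ENNReal.one_ne_top one_ne_zero (qW_pos hp).ne'
  have htend := ENNReal.tendsto_pow_atTop_nhds_zero_of_lt_one hlt
  have := ge_of_tendsto htend (Filter.Eventually.of_forall hb)
  exact le_antisymm this zero_le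

/-- The recursive cover of short-gap events. -/
def GmSet (W : Set Sig) (N g ωn : ℕ) : ℕ → ℕ → Set Sig
  | 0, _ => Set.univ
  | (m+1), s => ⋃ d ∈ Finset.Ico (g+1) (N^(ωn - m + 1)), (hitSet W (s+d) ∩ GmSet W N g ωn m (s+d))

lemma Gm_bound (hμ : IsBernoulli p μ)
    (hWdef : W = {x : Sig | x 0 = true ∧ ∀ k : ℤ, 1 ≤ k → k ≤ (g : ℤ) → x k = false})
    (hp : p ∈ Set.Ioo (0:ℝ) 1) :
    ∀ m, m ≤ ωn → ∀ (s : ℕ) (A : Set Sig), DetOn (Finset.Icc 0 ((s:ℤ) + g)) A →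
    μ (A ∩ GmSet W N g ωn m s) ≤
      μ A * ∏ j ∈ Finset.Icc (ωn - m + 1) ωn,
          ((N : ENNReal) ^ (j+1) * ENNReal.ofReal (p * (1 - p) ^ g)) := by
  intro m
  induction m with
  | zero =>
    intro _ s A hA
    rw [GmSet, Set.inter_univ, Finset.Icc_eq_empty (by omega), Finset.prod_empty, mul_one]
  | succ m ih =>
    intro hm s A hA
    set q := ENNReal.ofReal (p * (1 - p) ^ g) with hq
    have hABound : ∀ d ∈ Finset.Ico (g+1) (N^(ωn - m + 1)),
        μ (A ∩ (hitSet W (s+d) ∩ GmSet W N g ωn m (s+d))) ≤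
          μ A * q * ∏ j ∈ Finset.Icc (ωn - m + 1) ωn, ((N : ENNReal) ^ (j+1) * q) := by
      intro d hd
      simp only [Finset.mem_Ico] at hd
      have hAd : DetOn (Finset.Icc 0 ((s:ℤ) + d + g)) (A ∩ hitSet W (s+d)) := by
        refine (hA.mono (Finset.Icc_subset_Icc le_rfl (by push_cast; omega))).inter
          ((detOn_hitSet hWdef (s+d)).mono ?_)
        intro i hi
        simp only [blockF, Finset.mem_Icc] at hi ⊢
        push_cast at hi ⊢
        omega
      have h1 : μ ((A ∩ hitSet W (s+d)) ∩ GmSet W N g ωn m (s+d)) ≤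
          μ (A ∩ hitSet W (s+d)) * ∏ j ∈ Finset.Icc (ωn - m + 1) ωn,
            ((N : ENNReal) ^ (j+1) * q) := by
        have := ih (by omega) (s+d) (A ∩ hitSet W (s+d)) (by
          refine hAd.mono (Finset.Icc_subset_Icc le_rfl ?_)
          push_cast
          omega)
        exact this
      have h2 : μ (A ∩ hitSet W (s+d)) = μ A * q := by
        refine indep_hit hμ hWdef hp hA ?_
        push_cast
        omega
      rw [Set.inter_assoc] at h1
      calc μ (A ∩ (hitSet W (s+d) ∩ GmSet W N g ωn m (s+d))) ≤ _ := h1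
        _ = μ A * q * ∏ j ∈ Finset.Icc (ωn - m + 1) ωn, ((N : ENNReal) ^ (j+1) * q) := by
            rw [h2]
    calc μ (A ∩ GmSet W N g ωn (m+1) s)
        ≤ ∑ d ∈ Finset.Ico (g+1) (N^(ωn - m + 1)),
            μ (A ∩ (hitSet W (s+d) ∩ GmSet W N g ωn m (s+d))) := by
          rw [GmSet, Set.inter_iUnion₂]
          exact measure_biUnion_finset_le _ _
      _ ≤ ∑ d ∈ Finset.Ico (g+1) (N^(ωn - m + 1)),
            (μ A * q * ∏ j ∈ Finset.Icc (ωn - m + 1) ωn, ((N : ENNReal) ^ (j+1) * q)) :=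
          Finset.sum_le_sum hABound
      _ ≤ (N : ENNReal)^(ωn - m + 1) *
            (μ A * q * ∏ j ∈ Finset.Icc (ωn - m + 1) ωn, ((N : ENNReal) ^ (j+1) * q)) := by
          rw [Finset.sum_const, nsmul_eq_mul]
          refine mul_le_mul_left ?_ _
          rw [Nat.card_Ico]
          calc ((N^(ωn - m + 1) - (g+1) : ℕ) : ENNReal) ≤ ((N^(ωn - m + 1) : ℕ) : ENNReal) := by
                exact Nat.cast_le.2 (Nat.sub_le _ _)
            _ = (N : ENNReal)^(ωn - m + 1) := by push_cast; ring
      _ = μ A * ∏ j ∈ Finset.Icc (ωn - (m+1) + 1) ωn, ((N : ENNReal) ^ (j+1) * q) := by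
          have he : ωn - (m+1) + 1 = ωn - m := by omega
          rw [he]
          have hins : Finset.Icc (ωn - m) ωn = insert (ωn - m) (Finset.Icc (ωn - m + 1) ωn) := by
            ext j
            simp only [Finset.mem_Icc, Finset.mem_insert]
            omega
          rw [hins, Finset.prod_insert (by simp [Finset.mem_Icc])]
          have : (ωn - m) + 1 = ωn - m + 1 := rfl
          ring
    
end C3

section CS
open scoped Classical
variable {g N i ωn : ℕ} {W Z : Set Sig} {x : Sig}

noncomputable def CSet (Z W : Set Sig) (i t0 : ℕ) : Set Sig :=
  Z ∩ {x | shift^[t0] x ∈ W ∧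
    ((Finset.Icc 1 t0).filter (fun s => shift^[s] x ∈ W)).card = i - 1}

lemma detOn_CSet
    (hZdef : Z = {x : Sig | x 0 = true ∧ ∀ k : ℤ, 1 ≤ k → k ≤ (N : ℤ) → x k = false})
    (hWdef : W = {x : Sig | x 0 = true ∧ ∀ k : ℤ, 1 ≤ k → k ≤ (g : ℤ) → x k = false})
    (t0 : ℕ) :
    DetOn (Finset.Icc 0 (max (N : ℤ) ((t0 : ℤ) + g))) (CSet Z W i t0) := by
  intro x y hagree hx
  have htrans : ∀ s : ℕ, (s : ℤ) + g ≤ max (N : ℤ) ((t0 : ℤ) + g) →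
      (shift^[s] x ∈ W → shift^[s] y ∈ W) := by
    intro s hs hhit
    refine detOn_hitSet hWdef s x y ?_ hhit
    intro j hj
    refine hagree j ?_
    simp only [blockF, Finset.mem_Icc] at hj ⊢
    omega
  obtain ⟨hxZ, hxhit, hxcard⟩ := hx
  refine ⟨?_, ?_, ?_⟩
  · rw [hZdef] at hxZ ⊢
    refine ⟨?_, ?_⟩
    · rw [← hagree 0 (by
        simp only [Finset.mem_Icc]
        exact ⟨le_refl _, le_max_of_le_left (by positivity)⟩)]
      exact hxZ.1
    · intro k hk1 hk2
      rw [← hagree k (by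
        simp only [Finset.mem_Icc]
        exact ⟨by omega, le_max_of_le_left hk2⟩)]
      exact hxZ.2 k hk1 hk2
  · exact htrans t0 (by omega) hxhit
  · have hfeq : ((Finset.Icc 1 t0).filter (fun s => shift^[s] y ∈ W)) =
        ((Finset.Icc 1 t0).filter (fun s => shift^[s] x ∈ W)) := by
      apply Finset.filter_congr
      intro s hs
      simp only [Finset.mem_Icc] at hs
      have hble : (s : ℤ) + g ≤ max (N : ℤ) ((t0 : ℤ) + g) := by
        have h2 : (s : ℤ) ≤ (t0 : ℤ) := by exact_mod_cast hs.2
        omega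
      constructor
      · intro h
        refine detOn_hitSet hWdef s y x ?_ h
        intro j hj
        refine (hagree j ?_).symm
        simp only [blockF, Finset.mem_Icc] at hj ⊢
        omega
      · intro h
        exact htrans s hble h
    rw [hfeq]
    exact hxcard

lemma CSet_disjoint (hi : 1 ≤ i) {t0 t0' : ℕ} (hne : t0 ≠ t0') :
    Disjoint (CSet Z W i t0) (CSet Z W i t0') := by
  have key : ∀ a b : ℕ, a < b → ∀ y : Sig, y ∈ CSet Z W i a → y ∈ CSet Z W i b → False := by
    intro a b hab y hya hyb
    obtain ⟨_, hhita, hcarda⟩ := hya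
    obtain ⟨_, hhitb, hcardb⟩ := hyb
    have hsub : insert b ((Finset.Icc 1 a).filter (fun s => shift^[s] y ∈ W)) ⊆
        (Finset.Icc 1 b).filter (fun s => shift^[s] y ∈ W) := by
      intro s hs
      rcases Finset.mem_insert.1 hs with h | h
      · subst h
        simp only [Finset.mem_filter, Finset.mem_Icc]
        exact ⟨⟨by omega, le_rfl⟩, hhitb⟩
      · simp only [Finset.mem_filter, Finset.mem_Icc] at h ⊢
        exact ⟨⟨h.1.1, by omega⟩, h.2⟩
    have hcard := Finset.card_le_card hsub
    rw [Finset.card_insert_of_notMem (by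
      simp only [Finset.mem_filter, Finset.mem_Icc]
      rintro ⟨⟨_, h2⟩, _⟩
      omega), hcarda, hcardb] at hcard
    omega
  rcases Nat.lt_or_ge t0 t0' with h | h
  · exact Set.disjoint_left.2 fun y hy hy' => key t0 t0' h y hy hy'
  · have h2 : t0' < t0 := by omega
    exact Set.disjoint_left.2 fun y hy hy' => key t0' t0 h2 y hy' hy

lemma CSet_mem
    (hZdef : Z = {x : Sig | x 0 = true ∧ ∀ k : ℤ, 1 ≤ k → k ≤ (N : ℤ) → x k = false})
    (hWdef : W = {x : Sig | x 0 = true ∧ ∀ k : ℤ, 1 ≤ k → k ≤ (g : ℤ) → x k = false})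
    (hgN : g ≤ N) (hZx : x ∈ Z) (hx : x ∉ BadSet W) :
    x ∈ CSet Z W i (retTimeK W (i-1) x) := by
  have hW : x ∈ W := by
    rw [hZdef] at hZx
    rw [hWdef]
    exact ⟨hZx.1, fun k h1 h2 => hZx.2 k h1 (le_trans h2 (by exact_mod_cast hgN))⟩
  exact ⟨hZx, hit_tk hW hx (i-1), count_tk hWdef hW hx (i-1)⟩

lemma mem_Gm
    (hWdef : W = {x : Sig | x 0 = true ∧ ∀ k : ℤ, 1 ≤ k → k ≤ (g : ℤ) → x k = false})
    (hW : x ∈ W) (hx : x ∉ BadSet W) (hi : 1 ≤ i)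
    (hE : ∀ j ∈ Finset.Icc 1 ωn, retTimeK W (i+j-1) x - retTimeK W (i+j-2) x < N^(j+1)) :
    ∀ m, m ≤ ωn - 1 → x ∈ GmSet W N g ωn m (retTimeK W (i + ωn - 1 - m) x) := by
  intro m
  induction m with
  | zero => intro _; rw [GmSet]; trivial
  | succ m ih =>
    intro hm
    rw [GmSet]
    set a := i + ωn - 1 - (m+1) with ha
    have ha1 : i + ωn - 1 - m = a + 1 := by omega
    have hgap := gap_tk hWdef hW hx a
    set d := retTimeK W (a+1) x - retTimeK W a x with hd
    have htd : retTimeK W a x + d = retTimeK W (a+1) x := by omega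
    have hEj := hE (ωn - m) (by simp only [Finset.mem_Icc]; omega)
    have hidx1 : i + (ωn - m) - 1 = a + 1 := by omega
    have hidx2 : i + (ωn - m) - 2 = a := by omega
    rw [hidx1, hidx2] at hEj
    have hexp : ωn - m + 1 = (ωn - m) + 1 := rfl
    refine Set.mem_iUnion₂.2 ⟨d, ?_, ?_⟩
    · exact Finset.mem_Ico.2 ⟨by omega, by rw [hexp]; omega⟩
    · rw [htd]
      refine ⟨hit_tk hW hx (a+1), ?_⟩
      have := ih (by omega)
      rwa [ha1] at this

lemma cover_lemma
    (hZdef : Z = {x : Sig | x 0 = true ∧ ∀ k : ℤ, 1 ≤ k → k ≤ (N : ℤ) → x k = false})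
    (hWdef : W = {x : Sig | x 0 = true ∧ ∀ k : ℤ, 1 ≤ k → k ≤ (g : ℤ) → x k = false})
    (hgN : g < N) (hω : 1 ≤ ωn) (hi : 1 ≤ i) :
    {x ∈ Z | ∀ j ∈ Finset.Icc 1 ωn,
        retTimeK W (i+j-1) x - retTimeK W (i+j-2) x < N^(j+1)} ∩ (BadSet W)ᶜ ⊆
      ⋃ t0 : ℕ, ⋃ s1 ∈ Finset.Ioc (max N (t0+g)) (t0 + N^2 - 1),
        (CSet Z W i t0 ∩ (hitSet W s1 ∩ GmSet W N g ωn (ωn-1) s1)) := by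
  rintro x ⟨⟨hZx, hE⟩, hxB⟩
  have hxB' : x ∉ BadSet W := hxB
  have hW : x ∈ W := by
    rw [hZdef] at hZx
    rw [hWdef]
    exact ⟨hZx.1, fun k h1 h2 => hZx.2 k h1 (le_trans h2 (by exact_mod_cast hgN.le))⟩
  have hZx' : x ∈ Z := hZx
  set t0 := retTimeK W (i-1) x with ht0
  set s1 := retTimeK W i x with hs1
  have hgap : t0 + (g+1) ≤ s1 := by
    have := gap_tk hWdef hW hxB' (i-1)
    rwa [Nat.sub_add_cancel hi] at this
  have hNlt : N < s1 := by
    have h1 := retTime_Z_gt hZdef hZx' hxB' hWdef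
    rcases Nat.eq_or_lt_of_le hi with h | h
    · rwa [hs1, ← h]
    · have := mono_tk hWdef hW hxB' h
      omega
  have hup : s1 ≤ t0 + N^2 - 1 := by
    have hE1 := hE 1 (by simp only [Finset.mem_Icc]; omega)
    rw [show i + 1 - 1 = i from by omega, show i + 1 - 2 = i - 1 from by omega] at hE1
    have : (1:ℕ) + 1 = 2 := rfl
    rw [this] at hE1
    omega
  refine Set.mem_iUnion.2 ⟨t0, Set.mem_iUnion₂.2 ⟨s1, ?_, ?_, ?_, ?_⟩⟩
  · simp only [Finset.mem_Ioc]
    constructor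
    · omega
    · exact hup
  · exact CSet_mem hZdef hWdef hgN.le hZx' hxB'
  · exact hit_tk hW hxB' i
  · have := mem_Gm hWdef hW hxB' hi hE (ωn - 1) le_rfl
    rwa [show i + ωn - 1 - (ωn - 1) = i from by omega] at this
end CS

section MAIN
open MeasureTheory
open scoped Classical
variable {p : ℝ} {μ : Measure Sig} {g N i ωn : ℕ} {W Z : Set Sig}

lemma main_bound (hμ : IsBernoulli p μ) (hp : p ∈ Set.Ioo (0:ℝ) 1)
    (hZdef : Z = {x : Sig | x 0 = true ∧ ∀ k : ℤ, 1 ≤ k → k ≤ (N : ℤ) → x k = false})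
    (hWdef : W = {x : Sig | x 0 = true ∧ ∀ k : ℤ, 1 ≤ k → k ≤ (g : ℤ) → x k = false})
    (hgN : g < N) (hω : 1 ≤ ωn) (hi : 1 ≤ i) :
    μ {x ∈ Z | ∀ j ∈ Finset.Icc 1 ωn,
        retTimeK W (i+j-1) x - retTimeK W (i+j-2) x < N^(j+1)} ≤
      μ Z * ∏ j ∈ Finset.Icc 1 ωn,
        ((N : ENNReal) ^ (j+1) * ENNReal.ofReal (p * (1 - p) ^ g)) := by
  haveI := hμ.1
  set q := ENNReal.ofReal (p * (1 - p) ^ g) with hq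
  set E := {x ∈ Z | ∀ j ∈ Finset.Icc 1 ωn,
      retTimeK W (i+j-1) x - retTimeK W (i+j-2) x < N^(j+1)} with hE
  set P2 := ∏ j ∈ Finset.Icc 2 ωn, ((N : ENNReal) ^ (j+1) * q) with hP2
  -- step 1: remove the bad set
  have step1 : μ E ≤ μ (E ∩ (BadSet W)ᶜ) := by
    calc μ E ≤ μ ((E ∩ (BadSet W)ᶜ) ∪ BadSet W) := by
          refine measure_mono fun x hx => ?_
          by_cases hb : x ∈ BadSet W
          · exact Or.inr hb
          · exact Or.inl ⟨hx, hb⟩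
      _ ≤ μ (E ∩ (BadSet W)ᶜ) + μ (BadSet W) := measure_union_le _ _
      _ = μ (E ∩ (BadSet W)ᶜ) := by rw [mu_bad hμ hWdef hp, add_zero]
  -- per-piece bound
  have piece : ∀ t0 : ℕ, ∀ s1 ∈ Finset.Ioc (max N (t0+g)) (t0 + N^2 - 1),
      μ (CSet Z W i t0 ∩ (hitSet W s1 ∩ GmSet W N g ωn (ωn-1) s1)) ≤
        μ (CSet Z W i t0) * q * P2 := by
    intro t0 s1 hs1
    simp only [Finset.mem_Ioc] at hs1
    have hmax1 : N < s1 := lt_of_le_of_lt (le_max_left _ _) hs1.1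
    have hmax2 : t0 + g < s1 := lt_of_le_of_lt (le_max_right _ _) hs1.1
    have hdetC := detOn_CSet (i := i) hZdef hWdef t0
    have hdetA : DetOn (Finset.Icc 0 ((s1:ℤ) + g)) (CSet Z W i t0 ∩ hitSet W s1) := by
      refine (hdetC.mono (Finset.Icc_subset_Icc le_rfl ?_)).inter
        ((detOn_hitSet hWdef s1).mono ?_)
      · refine max_le ?_ ?_
        · have : (N:ℤ) ≤ (s1:ℤ) := by exact_mod_cast hmax1.le
          omega
        · have : (t0:ℤ) + g ≤ (s1:ℤ) := by exact_mod_cast hmax2.le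
          omega
      · intro j hj
        simp only [blockF, Finset.mem_Icc] at hj ⊢
        omega
    have h1 : μ ((CSet Z W i t0 ∩ hitSet W s1) ∩ GmSet W N g ωn (ωn-1) s1) ≤
        μ (CSet Z W i t0 ∩ hitSet W s1) * P2 := by
      have := Gm_bound (N := N) hμ hWdef hp (ωn-1) (Nat.sub_le ωn 1) s1
        (CSet Z W i t0 ∩ hitSet W s1) hdetA
      rwa [show ωn - (ωn-1) + 1 = 2 from by omega] at this
    have h2 : μ (CSet Z W i t0 ∩ hitSet W s1) = μ (CSet Z W i t0) * q := by
      refine indep_hit hμ hWdef hp hdetC ?_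
      refine max_lt ?_ ?_
      · exact_mod_cast hmax1
      · exact_mod_cast hmax2
    rw [Set.inter_assoc] at h1
    calc μ (CSet Z W i t0 ∩ (hitSet W s1 ∩ GmSet W N g ωn (ωn-1) s1)) ≤ _ := h1
      _ = μ (CSet Z W i t0) * q * P2 := by rw [h2]
  -- sum over s1
  have sum_s1 : ∀ t0 : ℕ,
      μ (⋃ s1 ∈ Finset.Ioc (max N (t0+g)) (t0 + N^2 - 1),
        (CSet Z W i t0 ∩ (hitSet W s1 ∩ GmSet W N g ωn (ωn-1) s1))) ≤
        (N : ENNReal)^2 * (μ (CSet Z W i t0) * q * P2) := by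
    intro t0
    calc μ _ ≤ ∑ s1 ∈ Finset.Ioc (max N (t0+g)) (t0 + N^2 - 1),
          μ (CSet Z W i t0 ∩ (hitSet W s1 ∩ GmSet W N g ωn (ωn-1) s1)) :=
          measure_biUnion_finset_le _ _
      _ ≤ ∑ s1 ∈ Finset.Ioc (max N (t0+g)) (t0 + N^2 - 1),
          (μ (CSet Z W i t0) * q * P2) := Finset.sum_le_sum (piece t0)
      _ ≤ (N : ENNReal)^2 * (μ (CSet Z W i t0) * q * P2) := by
          rw [Finset.sum_const, nsmul_eq_mul]
          refine mul_le_mul_left ?_ _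
          rw [Nat.card_Ioc]
          have hcard : t0 + N^2 - 1 - max N (t0+g) ≤ N^2 := by
            have h1 := le_max_right N (t0+g)
            omega
          calc ((t0 + N^2 - 1 - max N (t0+g) : ℕ) : ENNReal) ≤ ((N^2 : ℕ) : ENNReal) :=
              Nat.cast_le.2 hcard
            _ = (N : ENNReal)^2 := by push_cast; ring
  -- sum over t0
  have sum_t0 : ∑' t0 : ℕ, μ (CSet Z W i t0) ≤ μ Z := by
    rw [← measure_iUnion (fun a b hab => CSet_disjoint hi hab)
      (fun t0 => (detOn_CSet (i := i) hZdef hWdef t0).measurableSet)]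
    refine measure_mono (Set.iUnion_subset fun t0 => Set.inter_subset_left)
  calc μ E ≤ μ (E ∩ (BadSet W)ᶜ) := step1
    _ ≤ μ (⋃ t0 : ℕ, ⋃ s1 ∈ Finset.Ioc (max N (t0+g)) (t0 + N^2 - 1),
          (CSet Z W i t0 ∩ (hitSet W s1 ∩ GmSet W N g ωn (ωn-1) s1))) :=
        measure_mono (cover_lemma hZdef hWdef hgN hω hi)
    _ ≤ ∑' t0 : ℕ, μ (⋃ s1 ∈ Finset.Ioc (max N (t0+g)) (t0 + N^2 - 1),
          (CSet Z W i t0 ∩ (hitSet W s1 ∩ GmSet W N g ωn (ωn-1) s1))) := measure_iUnion_le _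
    _ ≤ ∑' t0 : ℕ, (N : ENNReal)^2 * (μ (CSet Z W i t0) * q * P2) :=
        ENNReal.tsum_le_tsum sum_s1
    _ = (N : ENNReal)^2 * q * P2 * ∑' t0 : ℕ, μ (CSet Z W i t0) := by
        rw [← ENNReal.tsum_mul_left]
        congr 1
        ext t0
        ring
    _ ≤ (N : ENNReal)^2 * q * P2 * μ Z := mul_le_mul_right sum_t0 _
    _ = μ Z * ∏ j ∈ Finset.Icc 1 ωn, ((N : ENNReal) ^ (j+1) * q) := by
        have hins : Finset.Icc 1 ωn = insert 1 (Finset.Icc 2 ωn) := by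
          ext j
          simp only [Finset.mem_Icc, Finset.mem_insert]
          omega
        rw [hins, Finset.prod_insert (by simp [Finset.mem_Icc])]
        rw [hP2]
        ring
end MAIN

lemma sum_Icc_tri (ωn : ℕ) : 2 * (∑ j ∈ Finset.Icc 1 ωn, (j+1)) + 2 = (ωn+1) * (ωn+2) := by
  induction ωn with
  | zero => simp
  | succ n ih =>
    have hins : Finset.Icc 1 (n+1) = insert (n+1) (Finset.Icc 1 n) := by
      ext j; simp only [Finset.mem_Icc, Finset.mem_insert]; omega
    rw [hins, Finset.sum_insert (by simp [Finset.mem_Icc])]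
    calc 2 * ((n + 1 + 1) + ∑ j ∈ Finset.Icc 1 n, (j+1)) + 2
        = (2 * (∑ j ∈ Finset.Icc 1 n, (j+1)) + 2) + 2*(n+2) := by ring
      _ = (n+1) * (n+2) + 2*(n+2) := by rw [ih]
      _ = (n+1+1) * (n+1+2) := by ring

lemma arith_bound {p : ℝ} (hp : p ∈ Set.Ioo (0:ℝ) 1) {g N ωn : ℕ} (hN : 1 ≤ N) :
    (∏ j ∈ Finset.Icc 1 ωn, ((N : ℝ) ^ (j + 1) * (p * (1 - p) ^ g))) ≤
      (N : ℝ) ^ ((ωn + 1) * (ωn + 2) / 2) * (p * (1 - p) ^ g) ^ ωn := by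
  have hc : (0:ℝ) ≤ p * (1 - p) ^ g := by
    have h1 : (0:ℝ) ≤ 1 - p := by linarith [hp.2]
    exact mul_nonneg hp.1.le (pow_nonneg h1 g)
  rw [Finset.prod_mul_distrib, Finset.prod_const, Nat.card_Icc]
  simp only [Nat.add_sub_cancel]
  rw [Finset.prod_pow_eq_pow_sum]
  refine mul_le_mul_of_nonneg_right ?_ (pow_nonneg hc _)
  refine pow_le_pow_right₀ ?_ ?_
  · exact_mod_cast hN
  · have h2 := sum_Icc_tri ωn
    refine (Nat.le_div_iff_mul_le (by norm_num)).2 ?_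
    omega

theorem final {p : ℝ} (hp : p ∈ Set.Ioo (0 : ℝ) 1) {μ : Measure Sig}
    (hμ : IsBernoulli p μ) {N g : ℕ} (hg1 : 1 ≤ g) (hgN : g < N)
    {Z W : Set Sig}
    (hZdef : Z = {x : Sig | x 0 = true ∧ ∀ k : ℤ, 1 ≤ k → k ≤ (N : ℤ) → x k = false})
    (hWdef : W = {x : Sig | x 0 = true ∧ ∀ k : ℤ, 1 ≤ k → k ≤ (g : ℤ) → x k = false})
    (hZ0 : 0 < μ Z) {ω i : ℕ} (hω : 1 ≤ ω) (hi : 1 ≤ i) :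
    (((μ Z)⁻¹ • μ.restrict Z)
      {x ∈ Z | ∀ j ∈ Finset.Icc 1 ω,
        retTimeK W (i + j - 1) x - retTimeK W (i + j - 2) x < N ^ (j + 1)} ≤
      ENNReal.ofReal (∏ j ∈ Finset.Icc 1 ω, ((N : ℝ) ^ (j + 1) * (p * (1 - p) ^ g)))) := by
  haveI := hμ.1
  have hZmeas : MeasurableSet Z := by
    refine DetOn.measurableSet (u := Finset.Icc 0 (N:ℤ)) ?_
    intro x y hxy hx
    rw [hZdef] at hx ⊢
    refine ⟨?_, ?_⟩
    · rw [← hxy 0 (by simp [Finset.mem_Icc])]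
      exact hx.1
    · intro k h1 h2
      rw [← hxy k (by simp only [Finset.mem_Icc]; omega)]
      exact hx.2 k h1 h2
  set S := {x ∈ Z | ∀ j ∈ Finset.Icc 1 ω,
      retTimeK W (i + j - 1) x - retTimeK W (i + j - 2) x < N ^ (j + 1)} with hS
  have hSsub : S ⊆ Z := Set.sep_subset _ _
  have happ : ((μ Z)⁻¹ • μ.restrict Z) S = (μ Z)⁻¹ * μ S := by
    rw [Measure.smul_apply, smul_eq_mul, Measure.restrict_apply' hZmeas,
      Set.inter_eq_self_of_subset_left hSsub]
  rw [happ]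
  have hmb := main_bound hμ hp hZdef hWdef hgN hω hi
  have hofreal : ENNReal.ofReal (∏ j ∈ Finset.Icc 1 ω, ((N : ℝ) ^ (j + 1) * (p * (1 - p) ^ g)))
      = ∏ j ∈ Finset.Icc 1 ω, ((N : ENNReal) ^ (j+1) * ENNReal.ofReal (p * (1 - p) ^ g)) := by
    rw [ENNReal.ofReal_prod_of_nonneg]
    · refine Finset.prod_congr rfl fun j hj => ?_
      rw [ENNReal.ofReal_mul (by positivity)]
      congr 1
      rw [ENNReal.ofReal_pow (by positivity : (0:ℝ) ≤ (N:ℝ)), ENNReal.ofReal_natCast]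
    · intro j hj
      have h1 : (0:ℝ) ≤ 1 - p := by linarith [hp.2]
      have h2 : (0:ℝ) ≤ p * (1-p)^g := mul_nonneg hp.1.le (pow_nonneg h1 g)
      positivity
  rw [hofreal]
  calc (μ Z)⁻¹ * μ S ≤ (μ Z)⁻¹ * (μ Z * ∏ j ∈ Finset.Icc 1 ω,
        ((N : ENNReal) ^ (j+1) * ENNReal.ofReal (p * (1 - p) ^ g))) := mul_le_mul_right hmb _
    _ = _ := by
        rw [← mul_assoc, ENNReal.inv_mul_cancel hZ0.ne' (measure_ne_top μ Z), one_mul]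

/-- bound on the probability of `ω` consecutive short `W`-return gaps. -/
theorem stmt14 (p : ℝ) (hp : p ∈ Set.Ioo (0 : ℝ) 1) (μ : Measure Sig)
    (hμ : IsBernoulli p μ) (N g : ℕ) (hg1 : 1 ≤ g) (hgN : g < N)
    (Z W : Set Sig)
    (hZdef : Z = {x : Sig | x 0 = true ∧ ∀ k : ℤ, 1 ≤ k → k ≤ (N : ℤ) → x k = false})
    (hWdef : W = {x : Sig | x 0 = true ∧ ∀ k : ℤ, 1 ≤ k → k ≤ (g : ℤ) → x k = false})
    (hZ0 : 0 < μ Z) (ω i : ℕ) (hω : 1 ≤ ω) (hi : 1 ≤ i) :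
    (((μ Z)⁻¹ • μ.restrict Z)
      {x ∈ Z | ∀ j ∈ Finset.Icc 1 ω,
        retTimeK W (i + j - 1) x - retTimeK W (i + j - 2) x < N ^ (j + 1)} ≤
      ENNReal.ofReal (∏ j ∈ Finset.Icc 1 ω, ((N : ℝ) ^ (j + 1) * (p * (1 - p) ^ g)))) ∧
    (∏ j ∈ Finset.Icc 1 ω, ((N : ℝ) ^ (j + 1) * (p * (1 - p) ^ g))) ≤
      (N : ℝ) ^ ((ω + 1) * (ω + 2) / 2) * (p * (1 - p) ^ g) ^ ω := by
  refine ⟨final hp hμ hg1 hgN hZdef hWdef hZ0 hω hi, arith_bound hp (by omega)⟩
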